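/- Ω is not typable: there is no context Δ and type α such that Δ ⊢ ΔΔ : α is derivable, where Δ = λx.xx and Ω = (λx.xx)(λx.xx). -/

import Mathlib

-- Computational and parallel types
mutual
  inductive CTy : Type
    | one : CTy
    | tens : CTy → CTy → CTy
    | arr : CTy → PTy → CTy
  inductive PTy : Type
    | ofC : CTy → PTy
    | par : PTy → PTy → PTy
end

-- Type equivalence: AC of ⊗ and ⅋, 1 neutral for ⊗
mutual
  inductive CEq : CTy → CTy → Prop
    | refl (τ) : CEq τ τ
    | symm : CEq τ ρ → CEq ρ τ
    | trans : CEq τ ρ → CEq ρ σ → CEq τ σ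
    | comm (τ ρ) : CEq (.tens τ ρ) (.tens ρ τ)
    | assoc (τ ρ σ) : CEq (.tens (.tens τ ρ) σ) (.tens τ (.tens ρ σ))
    | unit (τ) : CEq (.tens τ .one) τ
    | tensCongr : CEq τ τ' → CEq ρ ρ' → CEq (.tens τ ρ) (.tens τ' ρ')
    | arrCongr : CEq τ τ' → PEq α α' → CEq (.arr τ α) (.arr τ' α')
  inductive PEq : PTy → PTy → Prop
    | refl (α) : PEq α α
    | symm : PEq α β → PEq β α
    | trans : PEq α β → PEq β γ → PEq α γ
    | comm (α β) : PEq (.par α β) (.par β α)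
    | assoc (α β γ) : PEq (.par (.par α β) γ) (.par α (.par β γ))
    | parCongr : PEq α α' → PEq β β' → PEq (.par α β) (.par α' β')
    | ofC : CEq τ τ' → PEq (.ofC τ) (.ofC τ')
end

def Ctx : Type := ℕ → CTy
def Ctx.empty : Ctx := fun _ => CTy.one
def Ctx.tens (Γ Δ : Ctx) : Ctx := fun n => CTy.tens (Γ n) (Δ n)
def Ctx.single (x : ℕ) (τ : CTy) : Ctx := fun n => if n = x then τ else CTy.one
def Ctx.cons (τ : CTy) (Γ : Ctx) : Ctx := fun n =>
  match n with
  | 0 => τ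
  | n+1 => Γ n
def CtxEq (Γ Δ : Ctx) : Prop := ∀ n, CEq (Γ n) (Δ n)

def tensList (l : List CTy) : CTy := l.foldr CTy.tens CTy.one
def tensFin (n : ℕ) (f : Fin n → CTy) : CTy := tensList (List.ofFn f)
def tensCtxFin (n : ℕ) (Δ : Fin n → Ctx) : Ctx := fun x => tensFin n (fun i => Δ i x)

def parList : List PTy → PTy
  | [] => PTy.ofC CTy.one
  | [α] => α
  | α :: β :: rest => PTy.par α (parList (β :: rest))

def parFin (n : ℕ) (f : Fin n → PTy) : PTy := parList (List.ofFn f)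

/-- ⅋ᵏ1 : the par of k copies of 1 (left associated); junk value at 0. -/
def parOnes : ℕ → PTy
  | 0 => PTy.ofC CTy.one
  | 1 => PTy.ofC CTy.one
  | n+2 => PTy.par (parOnes (n+1)) (PTy.ofC CTy.one)

/-- Terms of Λ₊∥ in de Bruijn notation. -/
inductive Tm : Type
  | var : ℕ → Tm
  | lam : Tm → Tm
  | app : Tm → Tm → Tm
  | plus : Tm → Tm → Tm
  | par : Tm → Tm → Tm

def IsValue : Tm → Prop
  | .var _ => True
  | .lam _ => True
  | _ => False

def IsPar : Tm → Prop
  | .par _ _ => True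
  | _ => False

def shiftTm (c : ℕ) : Tm → Tm
  | .var n => if n < c then .var n else .var (n+1)
  | .lam M => .lam (shiftTm (c+1) M)
  | .app M N => .app (shiftTm c M) (shiftTm c N)
  | .plus M N => .plus (shiftTm c M) (shiftTm c N)
  | .par M N => .par (shiftTm c M) (shiftTm c N)

/-- Capture-avoiding substitution `M[V/k]` (de Bruijn). -/
def substTm : Tm → ℕ → Tm → Tm
  | .var n, k, V => if n = k then V else if k < n then .var (n-1) else .var n
  | .lam M, k, V => .lam (substTm M (k+1) (shiftTm 0 V))
  | .app M N, k, V => .app (substTm M k V) (substTm N k V)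
  | .plus M N, k, V => .plus (substTm M k V) (substTm N k V)
  | .par M N, k, V => .par (substTm M k V) (substTm N k V)

def closedUnder : ℕ → Tm → Prop
  | d, .var n => n < d
  | d, .lam M => closedUnder (d+1) M
  | d, .app M N => closedUnder d M ∧ closedUnder d N
  | d, .plus M N => closedUnder d M ∧ closedUnder d N
  | d, .par M N => closedUnder d M ∧ closedUnder d N

def Closed (M : Tm) : Prop := closedUnder 0 M

/-- One-step reduction; the boolean flag records whether a +-reduction is used. -/
inductive Step : Bool → Tm → Tm → Prop
  | beta {M V} : IsValue V → Step false (.app (.lam M) V) (substTm M 0 V)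
  | plusL (M N) : Step true (.plus M N) M
  | plusR (M N) : Step true (.plus M N) N
  | parAppL (M N P) : Step false (.app (.par M N) P) (.par (.app M P) (.app N P))
  | parAppR {V} (M N) : IsValue V → Step false (.app V (.par M N)) (.par (.app V M) (.app V N))
  | parL {b M M'} (N) : Step b M M' → Step b (.par M N) (.par M' N)
  | parR {b N N'} (M) : Step b N N' → Step b (.par M N) (.par M N')
  | appL {b M M'} (N) : Step b M M' → ¬ IsPar M → Step b (.app M N) (.app M' N)
  | appR {b M M' V} : IsValue V → Step b M M' → ¬ IsPar M → Step b (.app V M) (.app V M')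

/-- The two contracta of a single +-redex, reduced in context. -/
inductive PlusPair : Tm → Tm → Tm → Prop
  | base (M N) : PlusPair (.plus M N) M N
  | parL {M M₁ M₂} (N) : PlusPair M M₁ M₂ → PlusPair (.par M N) (.par M₁ N) (.par M₂ N)
  | parR {N N₁ N₂} (M) : PlusPair N N₁ N₂ → PlusPair (.par M N) (.par M N₁) (.par M N₂)
  | appL {M M₁ M₂} (N) : PlusPair M M₁ M₂ → ¬ IsPar M → PlusPair (.app M N) (.app M₁ N) (.app M₂ N)
  | appR {M M₁ M₂ V} : IsValue V → PlusPair M M₁ M₂ → ¬ IsPar M → PlusPair (.app V M) (.app V M₁) (.app V M₂)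

/-- n-step reduction. -/
inductive Steps : ℕ → Tm → Tm → Prop
  | refl (M) : Steps 0 M M
  | head {b M N P n} : Step b M N → Steps n N P → Steps (n+1) M P

/-- A closed term converges iff it reduces to a parallel composition of values. -/
def Converges (M : Tm) : Prop :=
  ∃ (n : ℕ) (V : Tm) (Vs : List Tm), IsValue V ∧ (∀ W ∈ Vs, IsValue W) ∧
    Steps n M (Vs.foldl Tm.par V)

/-- Typing derivations, indexed by the measure |π|. -/
inductive Deriv : Ctx → Tm → PTy → ℕ → Prop
  | ax (x : ℕ) (τ : CTy) : Deriv (Ctx.single x τ) (.var x) (.ofC τ) 0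
  | lamI (n : ℕ) (Δ : Fin n → Ctx) (τ : Fin n → CTy) (α : Fin n → PTy) (ms : Fin n → ℕ)
      (M : Tm) :
      (∀ i, Deriv (Ctx.cons (τ i) (Δ i)) M (α i) (ms i)) →
      Deriv (tensCtxFin n Δ) (.lam M)
        (.ofC (tensFin n (fun i => .arr (τ i) (α i)))) (∑ i, ms i)
  | appE (k : ℕ) (hk : 0 < k) (nf : Fin k → ℕ) (hn : ∀ i, 0 < nf i)
      (τ : ∀ i : Fin k, Fin (nf i) → CTy) (α : ∀ i : Fin k, Fin (nf i) → PTy)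
      (Δ : Ctx) (Γ : Fin k → Ctx) (m0 : ℕ) (ms : Fin k → ℕ) (M N : Tm) :
      Deriv Δ M (parFin k (fun i => .ofC (tensFin (nf i) (fun j => .arr (τ i j) (α i j))))) m0 →
      (∀ i, Deriv (Γ i) N (parFin (nf i) (fun j => .ofC (τ i j))) (ms i)) →
      Deriv (Ctx.tens Δ (tensCtxFin k Γ)) (.app M N)
        (parFin k (fun i => parFin (nf i) (α i)))
        ((m0 + (∑ i, ms i) + (∑ i, 2 * nf i)) - 1)
  | plusL {Δ M α m} (N) : Deriv Δ M α m → Deriv Δ (.plus M N) α (m+1)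
  | plusR {Δ N α m} (M) : Deriv Δ N α m → Deriv Δ (.plus M N) α (m+1)
  | parI {Δ Γ M N α β m m'} : Deriv Δ M α m → Deriv Γ N β m' →
      Deriv (Ctx.tens Δ Γ) (.par M N) (.par α β) (m + m')
  | eqv {Γ Γ' M α α' m} : Deriv Γ M α m → CtxEq Γ Γ' → PEq α α' → Deriv Γ' M α' m

def deltaTm : Tm := .lam (.app (.var 0) (.var 0))
def OmegaTm : Tm := .app deltaTm deltaTm
def Idt : Tm := .lam (.var 0)
def dstarTm : Tm := .lam (.lam (.app (.var 1) (.var 1)))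
def YstarTm : Tm := .app dstarTm dstarTm


/- ===================== Auxiliary development ===================== -/

mutual
  def csize : CTy → ℕ
    | .one => 0
    | .tens a b => csize a + csize b
    | .arr a α => csize a + psize α + 1
  def psize : PTy → ℕ
    | .ofC a => csize a
    | .par α β => psize α + psize β
end

def pCount : PTy → ℕ
  | .ofC _ => 1
  | .par α β => pCount α + pCount β

def arrowsL : CTy → List CTy
  | .one => []
  | .tens a b => arrowsL a ++ arrowsL b
  | .arr a α => [.arr a α]

def pAtomsL : PTy → List CTy
  | .ofC a => [a]
  | .par α β => pAtomsL α ++ pAtomsL β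

/-- Relation on arrow atoms: both are arrows with equivalent components. -/
def ArrRel : CTy → CTy → Prop := fun x y =>
  ∃ a b α β, x = .arr a α ∧ y = .arr b β ∧ CEq a b ∧ PEq α β

theorem ArrRel.symm' {x y} (h : ArrRel x y) : ArrRel y x := by
  obtain ⟨a, b, α, β, rfl, rfl, h1, h2⟩ := h
  exact ⟨b, a, β, α, rfl, rfl, h1.symm, h2.symm⟩

instance : IsTrans CTy ArrRel := by
  constructor
  rintro x y z ⟨a, b, α, β, rfl, rfl, h1, h2⟩ ⟨b', c, β', γ, hb, rfl, h3, h4⟩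
  obtain ⟨rfl, rfl⟩ : b' = b ∧ β' = β := by
    constructor <;> 
    · injection hb.symm
  exact ⟨a, c, α, γ, rfl, rfl, h1.trans h3, h2.trans h4⟩

instance : IsTrans CTy CEq := ⟨fun _ _ _ => CEq.trans⟩

theorem relArr_symm {s t : Multiset CTy} (h : Multiset.Rel ArrRel s t) :
    Multiset.Rel ArrRel t s := by
  induction h with
  | zero => exact Multiset.Rel.zero
  | cons h _ ih => exact Multiset.Rel.cons h.symm' ih

theorem relCEq_symm {s t : Multiset CTy} (h : Multiset.Rel CEq s t) :
    Multiset.Rel CEq t s := by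
  induction h with
  | zero => exact Multiset.Rel.zero
  | cons h _ ih => exact Multiset.Rel.cons h.symm ih

theorem arrows_isArr : ∀ τ, ∀ x ∈ arrowsL τ, ∃ a α, x = CTy.arr a α
  | .one => by simp [arrowsL]
  | .tens a b => by
      intro x hx
      rcases List.mem_append.1 hx with h | h
      · exact arrows_isArr a x h
      · exact arrows_isArr b x h
  | .arr a α => by
      intro x hx
      simp [arrowsL] at hx
      exact ⟨a, α, hx⟩

/-- Invariant for C-types. -/
def IC (τ ρ : CTy) : Prop :=
  csize τ = csize ρ ∧ Multiset.Rel ArrRel ↑(arrowsL τ) ↑(arrowsL ρ)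

/-- Invariant for P-types. -/
def IP (α β : PTy) : Prop :=
  psize α = psize β ∧ pCount α = pCount β ∧ Multiset.Rel CEq ↑(pAtomsL α) ↑(pAtomsL β)

theorem relArr_refl (s : Multiset CTy) (hs : ∀ x ∈ s, ∃ a α, x = CTy.arr a α) :
    Multiset.Rel ArrRel s s := by
  refine Multiset.rel_refl_of_refl_on ?_
  intro x hx
  obtain ⟨a, α, rfl⟩ := hs x hx
  exact ⟨a, a, α, α, rfl, rfl, CEq.refl a, PEq.refl α⟩

theorem inv_c {τ ρ} (h : CEq τ ρ) : IC τ ρ := by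
  refine CEq.rec (motive_1 := fun τ ρ _ => IC τ ρ) (motive_2 := fun α β _ => IP α β)
    ?_ ?_ ?_ ?_ ?_ ?_ ?_ ?_ ?_ ?_ ?_ ?_ ?_ ?_ ?_ h
  · intro τ
    exact ⟨rfl, relArr_refl _ (arrows_isArr τ)⟩
  · rintro τ ρ _ ⟨h1, h2⟩
    exact ⟨h1.symm, relArr_symm h2⟩
  · rintro τ ρ σ _ _ ⟨h1, h2⟩ ⟨h3, h4⟩
    exact ⟨h1.trans h3, h2.trans _ h4⟩
  · intro τ ρ
    constructor
    · simp [csize]; omega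
    · show Multiset.Rel ArrRel ↑(arrowsL τ ++ arrowsL ρ) ↑(arrowsL ρ ++ arrowsL τ)
      rw [← Multiset.coe_add, ← Multiset.coe_add, add_comm]
      refine relArr_refl _ ?_
      intro x hx
      rw [Multiset.mem_add, Multiset.mem_coe, Multiset.mem_coe] at hx
      rcases hx with h | h
      · exact arrows_isArr ρ x h
      · exact arrows_isArr τ x h
  · intro τ ρ σ
    constructor
    · simp [csize]; omega
    · show Multiset.Rel ArrRel ↑((arrowsL τ ++ arrowsL ρ) ++ arrowsL σ)
        ↑(arrowsL τ ++ (arrowsL ρ ++ arrowsL σ))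
      rw [List.append_assoc]
      refine relArr_refl _ ?_
      intro x hx
      rw [Multiset.mem_coe, List.mem_append, List.mem_append] at hx
      rcases hx with h | h | h
      · exact arrows_isArr τ x h
      · exact arrows_isArr ρ x h
      · exact arrows_isArr σ x h
  · intro τ
    constructor
    · simp [csize]
    · show Multiset.Rel ArrRel ↑(arrowsL τ ++ arrowsL .one) ↑(arrowsL τ)
      rw [show arrowsL .one = [] from rfl, List.append_nil]
      exact relArr_refl _ (arrows_isArr τ)
  · rintro τ τ' ρ ρ' _ _ ⟨h1, h2⟩ ⟨h3, h4⟩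
    constructor
    · simp [csize]; omega
    · show Multiset.Rel ArrRel ↑(arrowsL τ ++ arrowsL ρ) ↑(arrowsL τ' ++ arrowsL ρ')
      rw [← Multiset.coe_add, ← Multiset.coe_add]
      exact h2.add h4
  · rintro τ τ' α α' hc hp ⟨h1, h2⟩ ⟨h3, h4, h5⟩
    constructor
    · simp [csize]; omega
    · show Multiset.Rel ArrRel ↑[CTy.arr τ α] ↑[CTy.arr τ' α']
      exact Multiset.Rel.cons ⟨τ, τ', α, α', rfl, rfl, hc, hp⟩ Multiset.Rel.zero
  · intro α
    refine ⟨rfl, rfl, Multiset.rel_refl_of_refl_on fun x _ => CEq.refl x⟩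
  · rintro α β _ ⟨h1, h2, h3⟩
    exact ⟨h1.symm, h2.symm, relCEq_symm h3⟩
  · rintro α β γ _ _ ⟨h1, h2, h3⟩ ⟨h4, h5, h6⟩
    exact ⟨h1.trans h4, h2.trans h5, h3.trans _ h6⟩
  · intro α β
    refine ⟨by simp [psize]; omega, by simp [pCount]; omega, ?_⟩
    show Multiset.Rel CEq ↑(pAtomsL α ++ pAtomsL β) ↑(pAtomsL β ++ pAtomsL α)
    rw [← Multiset.coe_add, ← Multiset.coe_add, add_comm]
    exact Multiset.rel_refl_of_refl_on fun x _ => CEq.refl x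
  · intro α β γ
    refine ⟨by simp [psize]; omega, by simp [pCount]; omega, ?_⟩
    show Multiset.Rel CEq ↑((pAtomsL α ++ pAtomsL β) ++ pAtomsL γ)
      ↑(pAtomsL α ++ (pAtomsL β ++ pAtomsL γ))
    rw [List.append_assoc]
    exact Multiset.rel_refl_of_refl_on fun x _ => CEq.refl x
  · rintro α α' β β' _ _ ⟨h1, h2, h3⟩ ⟨h4, h5, h6⟩
    refine ⟨by simp [psize]; omega, by simp [pCount]; omega, ?_⟩
    show Multiset.Rel CEq ↑(pAtomsL α ++ pAtomsL β) ↑(pAtomsL α' ++ pAtomsL β')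
    rw [← Multiset.coe_add, ← Multiset.coe_add]
    exact h3.add h6
  · rintro τ τ' hc ⟨h1, h2⟩
    refine ⟨h1, rfl, ?_⟩
    show Multiset.Rel CEq ↑[τ] ↑[τ']
    exact Multiset.Rel.cons hc Multiset.Rel.zero

theorem inv_p {α β} (h : PEq α β) : IP α β := by
  refine PEq.rec (motive_1 := fun τ ρ _ => IC τ ρ) (motive_2 := fun α β _ => IP α β)
    ?_ ?_ ?_ ?_ ?_ ?_ ?_ ?_ ?_ ?_ ?_ ?_ ?_ ?_ ?_ h
  all_goals first
  | (intro τ; exact ⟨rfl, relArr_refl _ (arrows_isArr τ)⟩)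
  | (rintro τ ρ hcq ⟨h1, h2⟩; exact inv_c hcq.symm)
  | (rintro τ ρ σ hc1 hc2 _ _; exact inv_c (hc1.trans hc2))
  | (intro τ ρ; exact inv_c (CEq.comm τ ρ))
  | (intro τ ρ σ; exact inv_c (CEq.assoc τ ρ σ))
  | (intro τ; exact inv_c (CEq.unit τ))
  | (rintro τ τ' ρ ρ' hc1 hc2 _ _; exact inv_c (hc1.tensCongr hc2))
  | (rintro τ τ' α α' hc hp _ _; exact inv_c (hc.arrCongr hp))
  | skip
  · intro α
    exact ⟨rfl, rfl, Multiset.rel_refl_of_refl_on fun x _ => CEq.refl x⟩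
  · rintro α β _ ⟨h1, h2, h3⟩
    exact ⟨h1.symm, h2.symm, relCEq_symm h3⟩
  · rintro α β γ _ _ ⟨h1, h2, h3⟩ ⟨h4, h5, h6⟩
    exact ⟨h1.trans h4, h2.trans h5, h3.trans _ h6⟩
  · intro α β
    refine ⟨by simp [psize]; omega, by simp [pCount]; omega, ?_⟩
    show Multiset.Rel CEq ↑(pAtomsL α ++ pAtomsL β) ↑(pAtomsL β ++ pAtomsL α)
    rw [← Multiset.coe_add, ← Multiset.coe_add, add_comm]
    exact Multiset.rel_refl_of_refl_on fun x _ => CEq.refl x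
  · intro α β γ
    refine ⟨by simp [psize]; omega, by simp [pCount]; omega, ?_⟩
    show Multiset.Rel CEq ↑((pAtomsL α ++ pAtomsL β) ++ pAtomsL γ)
      ↑(pAtomsL α ++ (pAtomsL β ++ pAtomsL γ))
    rw [List.append_assoc]
    exact Multiset.rel_refl_of_refl_on fun x _ => CEq.refl x
  · rintro α α' β β' _ _ ⟨h1, h2, h3⟩ ⟨h4, h5, h6⟩
    refine ⟨by simp [psize]; omega, by simp [pCount]; omega, ?_⟩
    show Multiset.Rel CEq ↑(pAtomsL α ++ pAtomsL β) ↑(pAtomsL α' ++ pAtomsL β')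
    rw [← Multiset.coe_add, ← Multiset.coe_add]
    exact h3.add h6
  · rintro τ τ' hc ⟨h1, h2⟩
    refine ⟨h1, rfl, Multiset.Rel.cons hc Multiset.Rel.zero⟩

theorem peq_ofC {a b : CTy} (h : PEq (.ofC a) (.ofC b)) : CEq a b := by
  have h3 := (inv_p h).2.2
  have : a ∈ (↑(pAtomsL (PTy.ofC a)) : Multiset CTy) := by simp [pAtomsL]
  obtain ⟨y, hy, hcy⟩ := Multiset.exists_mem_of_rel_of_mem h3 this
  simp [pAtomsL] at hy
  exact hy ▸ hcy

/- ------------- list/tensor lemmas ------------- -/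

theorem tensList_append (l₁ l₂ : List CTy) :
    CEq (tensList (l₁ ++ l₂)) (.tens (tensList l₁) (tensList l₂)) := by
  induction l₁ with
  | nil =>
      show CEq (tensList l₂) (.tens (tensList []) (tensList l₂))
      exact CEq.symm ((CEq.comm _ _).trans (CEq.unit _))
  | cons a l ih =>
      show CEq (.tens a (tensList (l ++ l₂))) (.tens (.tens a (tensList l)) (tensList l₂))
      exact ((CEq.refl a).tensCongr ih).trans (CEq.symm (CEq.assoc _ _ _))

theorem ceq_tensList_arrows : ∀ τ, CEq τ (tensList (arrowsL τ))
  | .one => CEq.refl _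
  | .tens a b =>
      ((ceq_tensList_arrows a).tensCongr (ceq_tensList_arrows b)).trans
        (CEq.symm (tensList_append _ _))
  | .arr a α => CEq.symm (CEq.unit _)

theorem tensList_congr : ∀ {l l' : List CTy}, List.Forall₂ CEq l l' →
    CEq (tensList l) (tensList l') := by
  intro l l' h
  induction h with
  | nil => exact CEq.refl _
  | cons h _ ih => exact h.tensCongr ih

theorem arrowsL_tensList : ∀ l : List CTy, (∀ x ∈ l, ∃ a α, x = CTy.arr a α) →
    arrowsL (tensList l) = l := by
  intro l
  induction l with
  | nil => intro; rfl
  | cons x l ih =>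
      intro h
      obtain ⟨a, α, rfl⟩ := h x (by simp)
      show arrowsL (.arr a α) ++ arrowsL (tensList l) = _
      rw [ih fun y hy => h y (by simp [hy])]
      rfl

theorem arrowsL_tensFin {n} (a : Fin n → CTy) (b : Fin n → PTy) :
    arrowsL (tensFin n fun i => .arr (a i) (b i)) = List.ofFn (fun i => CTy.arr (a i) (b i)) := by
  refine arrowsL_tensList _ ?_
  intro x hx
  rw [List.mem_ofFn] at hx
  obtain ⟨i, rfl⟩ := hx
  exact ⟨a i, b i, rfl⟩

theorem tensFin_one (f : Fin 1 → CTy) : tensFin 1 f = .tens (f 0) .one := by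
  simp [tensFin, tensList, List.ofFn_succ, List.ofFn_zero]

theorem parFin_one (f : Fin 1 → PTy) : parFin 1 f = f 0 := by
  simp [parFin, parList, List.ofFn_succ, List.ofFn_zero]

theorem tensFin_eq_one {n} (f : Fin n → CTy) (h : n = 1) (i : Fin n) :
    tensFin n f = .tens (f i) .one := by
  subst h
  rw [tensFin_one]
  exact congrArg (fun x => CTy.tens (f x) .one) (Subsingleton.elim _ _)

theorem parFin_eq_one {n} (f : Fin n → PTy) (h : n = 1) (i : Fin n) :
    parFin n f = f i := by
  subst h
  rw [parFin_one]
  exact congrArg f (Subsingleton.elim _ _)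

theorem pCount_parList : ∀ l : List PTy, l ≠ [] → pCount (parList l) = (l.map pCount).sum
  | [], h => absurd rfl h
  | [α], _ => by simp [parList]
  | α :: β :: rest, _ => by
      show pCount α + pCount (parList (β :: rest)) = _
      rw [pCount_parList (β :: rest) (by simp)]
      simp

theorem pCount_parFin_ofC {k : ℕ} (hk : 0 < k) (X : Fin k → CTy) :
    pCount (parFin k fun i => .ofC (X i)) = k := by
  rw [parFin, pCount_parList _ (by simp; omega), List.map_ofFn, List.sum_ofFn]
  simp [Function.comp, pCount]

/- ------------- derivation inversion lemmas ------------- -/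

theorem var_inv {Γ t γ m} (h : Deriv Γ t γ m) : ∀ x, t = .var x →
    ∃ ρ, CtxEq (Ctx.single x ρ) Γ ∧ PEq (.ofC ρ) γ := by
  induction h with
  | ax y τ =>
      intro x hx
      injection hx with hyx
      subst hyx
      exact ⟨τ, fun n => CEq.refl _, PEq.refl _⟩
  | eqv _ hΓ hα ih =>
      intro x hx
      obtain ⟨ρ, h1, h2⟩ := ih x hx
      exact ⟨ρ, fun n => (h1 n).trans (hΓ n), h2.trans hα⟩
  | lamI => intro x hx; simp at hx
  | appE => intro x hx; simp at hx
  | plusL => intro x hx; simp at hx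
  | plusR => intro x hx; simp at hx
  | parI => intro x hx; simp at hx

theorem lam_inv {Γ t γ m} (h : Deriv Γ t γ m) : ∀ M, t = .lam M →
    ∃ (n : ℕ) (Δf : Fin n → Ctx) (τf : Fin n → CTy) (αf : Fin n → PTy) (msf : Fin n → ℕ),
      (∀ i, Deriv (Ctx.cons (τf i) (Δf i)) M (αf i) (msf i)) ∧
      PEq (.ofC (tensFin n fun i => .arr (τf i) (αf i))) γ := by
  induction h with
  | lamI n Δ τ α ms M hprem =>
      intro M' hM
      injection hM with hMM
      subst hMM
      exact ⟨n, Δ, τ, α, ms, hprem, PEq.refl _⟩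
  | eqv _ hΓ hα ih =>
      intro M hM
      obtain ⟨n, Δf, τf, αf, msf, h1, h2⟩ := ih M hM
      exact ⟨n, Δf, τf, αf, msf, h1, h2.trans hα⟩
  | ax => intro M hM; simp at hM
  | appE => intro M hM; simp at hM
  | plusL => intro M hM; simp at hM
  | plusR => intro M hM; simp at hM
  | parI => intro M hM; simp at hM

theorem app_inv {Γ t γ m} (h : Deriv Γ t γ m) : ∀ M N, t = .app M N →
    ∃ (k : ℕ) (_ : 0 < k) (nf : Fin k → ℕ) (_ : ∀ i, 0 < nf i)
      (τ : ∀ i : Fin k, Fin (nf i) → CTy) (α : ∀ i : Fin k, Fin (nf i) → PTy)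
      (Δ : Ctx) (Γf : Fin k → Ctx) (m0 : ℕ) (ms : Fin k → ℕ),
      Deriv Δ M (parFin k fun i => .ofC (tensFin (nf i) fun j => .arr (τ i j) (α i j))) m0 ∧
      (∀ i, Deriv (Γf i) N (parFin (nf i) fun j => .ofC (τ i j)) (ms i)) ∧
      CtxEq (Ctx.tens Δ (tensCtxFin k Γf)) Γ := by
  induction h with
  | appE k hk nf hn τ α Δ Γf m0 ms M N hM hN =>
      intro M' N' hMN
      injection hMN with h1 h2
      subst h1; subst h2
      exact ⟨k, hk, nf, hn, τ, α, Δ, Γf, m0, ms, hM, hN, fun n => CEq.refl _⟩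
  | eqv _ hΓ hα ih =>
      intro M N hMN
      obtain ⟨k, hk, nf, hn, τ, α, Δ, Γf, m0, ms, h1, h2, h3⟩ := ih M N hMN
      exact ⟨k, hk, nf, hn, τ, α, Δ, Γf, m0, ms, h1, h2, fun n => (h3 n).trans (hΓ n)⟩
  | ax => intro M N hMN; simp at hMN
  | lamI => intro M N hMN; simp at hMN
  | plusL => intro M N hMN; simp at hMN
  | plusR => intro M N hMN; simp at hMN
  | parI => intro M N hMN; simp at hMN

/- ------------- building typings of λ-abstractions from premise families ------------- -/

theorem build {body : Tm} {n : ℕ} {Δf : Fin n → Ctx} {a : Fin n → CTy} {b : Fin n → PTy}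
    {ms : Fin n → ℕ}
    (prem : ∀ i, Deriv (Ctx.cons (a i) (Δf i)) body (b i) (ms i))
    (ρ : CTy) (hcov : ∀ x ∈ arrowsL ρ, ∃ i : Fin n, ArrRel x (.arr (a i) (b i))) :
    ∃ Γ m, Deriv Γ (.lam body) (.ofC ρ) m := by
  classical
  have hg : ∀ j : Fin (arrowsL ρ).length,
      ∃ i : Fin n, ArrRel ((arrowsL ρ).get j) (.arr (a i) (b i)) :=
    fun j => hcov _ (List.get_mem _ j)
  choose g hgR using hg
  refine ⟨_, _, Deriv.eqv
    (Deriv.lamI (arrowsL ρ).length (fun j => Δf (g j)) (fun j => a (g j)) (fun j => b (g j))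
      (fun j => ms (g j)) body (fun j => prem (g j)))
    (fun n => CEq.refl _) (PEq.ofC ?_)⟩
  have h2 : List.Forall₂ CEq (List.ofFn (fun j => CTy.arr (a (g j)) (b (g j)))) (arrowsL ρ) := by
    rw [List.forall₂_iff_get]
    refine ⟨by simp, ?_⟩
    intro i h1' h2'
    have hR := hgR ⟨i, h2'⟩
    obtain ⟨x1, y1, α1, β1, hx1, hy1, hc1, hp1⟩ := hR
    rw [List.get_ofFn]
    show CEq (CTy.arr (a (g ⟨i, h2'⟩)) (b (g ⟨i, h2'⟩))) _
    rw [hx1, hy1]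
    exact hc1.symm.arrCongr hp1.symm
  have h1 : CEq ρ (tensList (arrowsL ρ)) := ceq_tensList_arrows ρ
  exact CEq.symm (h1.trans (CEq.symm (tensList_congr h2)))

/- ------------- the descent on self-applicable types of Δ ------------- -/

theorem delta_desc : ∀ (N : ℕ) (τ : CTy), csize τ < N →
    (∃ Γ m, Deriv Γ deltaTm (.ofC τ) m) →
    (∃ Γ' m' α', Deriv Γ' deltaTm (.ofC (.tens (.arr τ α') .one)) m') → False := by
  intro N
  induction N with
  | zero => intro τ h; omega
  | succ N ih =>
    rintro τ hτN ⟨Γ₁, m₁, h1⟩ ⟨Γ₂, m₂, α', h2⟩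
    obtain ⟨n, Δf, a, b, ms, prem, hpe⟩ := lam_inv h2 (.app (.var 0) (.var 0)) rfl
    have hce : CEq (tensFin n fun i => .arr (a i) (b i)) (.tens (.arr τ α') .one) := peq_ofC hpe
    have hrel := (inv_c hce).2
    rw [arrowsL_tensFin] at hrel
    have harr1 : arrowsL (.tens (.arr τ α') .one) = [.arr τ α'] := rfl
    rw [harr1] at hrel
    have hn1 : n = 1 := by
      have := Multiset.card_eq_card_of_rel hrel
      simpa using this
    subst hn1
    have hmem : (CTy.arr (a 0) (b 0)) ∈
        (↑(List.ofFn fun i => CTy.arr (a i) (b i)) : Multiset CTy) := by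
      rw [Multiset.mem_coe, List.mem_ofFn]
      exact ⟨0, rfl⟩
    obtain ⟨y, hy, hR⟩ := Multiset.exists_mem_of_rel_of_mem hrel hmem
    rw [Multiset.mem_coe, List.mem_singleton] at hy
    subst hy
    obtain ⟨x1, y1, α1, β1, hx1, hy1, hc1, hp1⟩ := hR
    injection hx1 with e1 e2
    injection hy1 with e3 e4
    have hceaτ : CEq (a 0) τ := by rw [e1, e3]; exact hc1
    -- analyse the body x x
    obtain ⟨k, hk, nf, hnf, σf, βf, ΔM, Γf, m0', ms', hM, hN, hctx⟩ :=
      app_inv (prem 0) (.var 0) (.var 0) rfl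
    obtain ⟨ρ₁, hctx1, hpe1⟩ := var_inv hM 0 rfl
    have hk1 : k = 1 := by
      have hc := (inv_p hpe1).2.1
      rw [pCount_parFin_ofC hk _] at hc
      simpa [pCount] using hc.symm
    subst hk1
    rw [parFin_one] at hpe1
    obtain ⟨ρ₂, hctx2, hpe2⟩ := var_inv (hN 0) 0 rfl
    have hnf1 : nf 0 = 1 := by
      have hc := (inv_p hpe2).2.1
      rw [pCount_parFin_ofC (hnf 0) _] at hc
      simpa [pCount] using hc.symm
    have i₁ : Fin (nf 0) := ⟨0, hnf 0⟩
    rw [parFin_eq_one _ hnf1 i₁] at hpe2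
    rw [tensFin_eq_one _ hnf1 i₁] at hpe1
    have hcρ₁ : CEq ρ₁ (.tens (.arr (σf 0 i₁) (βf 0 i₁)) .one) := peq_ofC hpe1
    have hcρ₂ : CEq ρ₂ (σf 0 i₁) := peq_ofC hpe2
    have hc0 : CEq (CTy.tens (ΔM 0) (tensFin 1 fun i => Γf i 0)) (a 0) := hctx 0
    have hΔM0 : CEq ρ₁ (ΔM 0) := by simpa [Ctx.single] using hctx1 0
    have hΓ00 : CEq ρ₂ (Γf 0 0) := by simpa [Ctx.single] using hctx2 0
    have step1 : CEq τ (.tens (ΔM 0) (tensFin 1 fun i => Γf i 0)) :=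
      hceaτ.symm.trans hc0.symm
    rw [tensFin_one] at step1
    have step3 : CEq (ΔM 0) (.tens (.arr (σf 0 i₁) (βf 0 i₁)) .one) :=
      hΔM0.symm.trans hcρ₁
    have step4 : CEq (CTy.tens (Γf 0 0) .one) (.tens (σf 0 i₁) .one) :=
      (hΓ00.symm.trans hcρ₂).tensCongr (CEq.refl _)
    have hkey : CEq τ
        (.tens (.tens (.arr (σf 0 i₁) (βf 0 i₁)) .one) (.tens (σf 0 i₁) .one)) :=
      step1.trans (step3.tensCongr step4)
    have hsz := (inv_c hkey).1
    have hlt : csize (σf 0 i₁) < csize τ := by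
      simp [csize] at hsz; omega
    -- now split the other typing of Δ
    obtain ⟨n₂, Δ₂, a₂, b₂, ms₂, prem₂, hpe₂⟩ := lam_inv h1 (.app (.var 0) (.var 0)) rfl
    have hce₂ : CEq (tensFin n₂ fun i => .arr (a₂ i) (b₂ i)) τ := peq_ofC hpe₂
    have hrel₂ := (inv_c hce₂).2
    rw [arrowsL_tensFin] at hrel₂
    have hrelT := (inv_c hkey).2
    have harrT : arrowsL
        (CTy.tens (.tens (.arr (σf 0 i₁) (βf 0 i₁)) .one) (.tens (σf 0 i₁) .one))
        = CTy.arr (σf 0 i₁) (βf 0 i₁) :: arrowsL (σf 0 i₁) := by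
      simp [arrowsL]
    rw [harrT] at hrelT
    have hrelC := hrel₂.trans _ hrelT
    have hcov : ∀ x ∈ (CTy.arr (σf 0 i₁) (βf 0 i₁) :: arrowsL (σf 0 i₁)),
        ∃ i : Fin n₂, ArrRel x (.arr (a₂ i) (b₂ i)) := by
      intro x hx
      obtain ⟨y, hy, hR⟩ := Multiset.exists_mem_of_rel_of_mem (relArr_symm hrelC)
        (Multiset.mem_coe.2 hx)
      rw [Multiset.mem_coe, List.mem_ofFn] at hy
      obtain ⟨i, hi⟩ := hy
      have hi' : CTy.arr (a₂ i) (b₂ i) = y := hi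
      rw [← hi'] at hR
      exact ⟨i, hR⟩
    obtain ⟨Γa, ma, hpa⟩ := build prem₂ (σf 0 i₁)
      (fun x hx => hcov x (List.mem_cons_of_mem _ hx))
    obtain ⟨Γb, mb, hpb⟩ := build prem₂ (.tens (.arr (σf 0 i₁) (βf 0 i₁)) .one) (by
      intro x hx
      have hx' : x = CTy.arr (σf 0 i₁) (βf 0 i₁) := by simpa [arrowsL] using hx
      subst hx'
      exact hcov _ List.mem_cons_self)
    exact ih (σf 0 i₁) (by omega) ⟨Γa, ma, hpa⟩ ⟨Γb, mb, βf 0 i₁, hpb⟩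

theorem omega_not_typable :
    ¬ ∃ (Δ : Ctx) (α : PTy) (m : ℕ), Deriv Δ OmegaTm α m := by
  rintro ⟨Δ, α, m, h⟩
  obtain ⟨k, hk, nf, hnf, σf, βf, ΔM, Γf, m0, ms, hM, hN, -⟩ :=
    app_inv h deltaTm deltaTm rfl
  obtain ⟨n1, D1, t1, a1, m1, p1, hpe1⟩ := lam_inv hM (.app (.var 0) (.var 0)) rfl
  have hk1 : k = 1 := by
    have hc := (inv_p hpe1).2.1
    rw [pCount_parFin_ofC hk _] at hc
    simpa [pCount] using hc.symm
  subst hk1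
  rw [parFin_one] at hM
  have hN0 := hN 0
  obtain ⟨n2, D2, t2, a2, m2, p2, hpe2⟩ := lam_inv hN0 (.app (.var 0) (.var 0)) rfl
  have hnf1 : nf 0 = 1 := by
    have hc := (inv_p hpe2).2.1
    rw [pCount_parFin_ofC (hnf 0) _] at hc
    simpa [pCount] using hc.symm
  have i₁ : Fin (nf 0) := ⟨0, hnf 0⟩
  rw [tensFin_eq_one _ hnf1 i₁] at hM
  rw [parFin_eq_one _ hnf1 i₁] at hN0
  exact delta_desc (csize (σf 0 i₁) + 1) (σf 0 i₁) (by omega)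
    ⟨Γf 0, ms 0, hN0⟩ ⟨ΔM, m0, βf 0 i₁, hM⟩
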